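/- For each index i, the real function f(t) = ℓ evaluated with the diagonal entry a_i of A replaced by t (keeping all other entries of A, V, μ fixed) is differentiable at t = a_i and its derivative equals (1/2)·(Σ_{ii} − r_i²), where Σ_{ii} is the (i,i)-entry of Σ = Ω⁻¹ and r_i = y_i − μ_i. -/

import Mathlib

open Matrix

/-- Multivariate Gaussian log-likelihood in the low-rank precision parametrization
`Ω = A + V·Vᵀ` with `A = diagonal a`:
`ℓ = -(D/2)·log(2π) + (1/2)·log(det Ω) - (1/2)·(y-μ)ᵀ Ω (y-μ)`. -/
noncomputable def gaussLRLL (D R : ℕ) (y μ : Fin D → ℝ) (a : Fin D → ℝ)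
    (V : Matrix (Fin D) (Fin R) ℝ) : ℝ :=
  -((D : ℝ) / 2) * Real.log (2 * Real.pi)
    + (1 / 2) * Real.log (Matrix.diagonal a + V * V.transpose).det
    - (1 / 2) * ((y - μ) ⬝ᵥ (Matrix.diagonal a + V * V.transpose).mulVec (y - μ))

/-- First partial derivative of the low-rank Gaussian log-likelihood with respect to the
diagonal entry `a_i`: it equals `(1/2)·(Σ_{ii} - r_i²)` where `Σ = Ω⁻¹` and `r = y - μ`. -/
theorem gaussLR_deriv_a (D R : ℕ) (hD : 1 ≤ D) (y μ : Fin D → ℝ)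
    (a : Fin D → ℝ) (ha : ∀ k, 0 < a k)
    (V : Matrix (Fin D) (Fin R) ℝ) (i : Fin D) :
    HasDerivAt (fun t : ℝ => gaussLRLL D R y μ (Function.update a i t) V)
      ((1 / 2) * (((Matrix.diagonal a + V * V.transpose)⁻¹) i i - (y i - μ i) ^ 2))
      (a i) := by
  classical
  set r : Fin D → ℝ := y - μ with hr
  set M : Matrix (Fin D) (Fin D) ℝ := Matrix.diagonal a + V * V.transpose with hMdef
  set Ωt : ℝ → Matrix (Fin D) (Fin D) ℝ :=
    fun t => Matrix.diagonal (Function.update a i t) + V * V.transpose with hΩt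
  have hΩa : Ωt (a i) = M := by
    simp [hΩt, hMdef, Function.update_eq_self]
  -- Ωt t as row update of Ωt 0
  have hrow : ∀ t : ℝ, Ωt t = (Ωt 0).updateRow i ((Ωt 0 i) + t • (Pi.single i 1 : Fin D → ℝ)) := by
    intro t
    ext k j
    by_cases hk : k = i
    · subst hk
      simp only [Matrix.updateRow_self, Pi.add_apply, Pi.smul_apply, Pi.single_apply,
        hΩt, Matrix.add_apply, Matrix.diagonal_apply, Function.update_apply, smul_eq_mul]
      by_cases hij : k = j
      · subst hij; simp; ring
      · simp [hij, Ne.symm hij]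
    · simp [Matrix.updateRow_ne hk, hΩt, Matrix.diagonal_apply, Function.update_apply, hk]
  -- determina affine in t
  set c : ℝ := ((Ωt 0).updateRow i (Pi.single i 1)).det with hc
  have hdet : ∀ t : ℝ, (Ωt t).det = (Ωt 0).det + t * c := by
    intro t
    rw [hrow t, Matrix.det_updateRow_add, Matrix.det_updateRow_smul,
      Matrix.updateRow_eq_self]
  -- c equals adjugate M i i
  have hcadj : c = M.adjugate i i := by
    rw [Matrix.adjugate_apply, hc]
    congr 1
    ext k j
    by_cases hk : k = i
    · subst hk; simp
    · simp [Matrix.updateRow_ne hk, hΩt, hMdef, Matrix.diagonal_apply,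
        Function.update_apply, hk]
  -- positive definiteness
  have hVVt : (V * V.transpose).PosSemidef := by
    have h := Matrix.posSemidef_self_mul_conjTranspose V
    have : V.conjTranspose = V.transpose := by
      ext k j; simp [Matrix.conjTranspose_apply]
    rwa [this] at h
  have hMpd : M.PosDef := (Matrix.PosDef.diagonal ha).add_posSemidef hVVt
  have hdetpos : 0 < M.det := hMpd.det_pos
  have hdetM : (Ωt 0).det + a i * c = M.det := by rw [← hdet, hΩa]
  -- quadratic part affine in t
  have hsplit : ∀ t : ℝ, Ωt t = Ωt 0 + Matrix.diagonal (t • (Pi.single i 1 : Fin D → ℝ)) := by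
    intro t
    ext k j
    by_cases hk : k = i
    · subst hk
      by_cases hij : k = j
      · subst hij; simp [hΩt, Matrix.diagonal_apply, Function.update_apply]; ring
      · simp [hΩt, Matrix.diagonal_apply, hij]
    · simp [hΩt, Matrix.diagonal_apply, Function.update_apply, hk]
  have hquad : ∀ t : ℝ, r ⬝ᵥ (Ωt t).mulVec r = r ⬝ᵥ (Ωt 0).mulVec r + t * r i ^ 2 := by
    intro t
    rw [hsplit t, Matrix.add_mulVec, dotProduct_add]
    congr 1
    simp only [dotProduct, Matrix.mulVec_diagonal, Pi.smul_apply, Pi.single_apply,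
      smul_eq_mul, mul_ite, mul_one, mul_zero, ite_mul, zero_mul]
    rw [Finset.sum_ite_eq' Finset.univ i (fun k => (y - μ) k * (t * (y - μ) k))]
    simp only [hr, Finset.mem_univ, if_true, Pi.sub_apply]
    ring
  -- rewrite the function
  have hfun : (fun t : ℝ => gaussLRLL D R y μ (Function.update a i t) V)
      = fun t : ℝ => -((D : ℝ) / 2) * Real.log (2 * Real.pi)
          + (1 / 2) * Real.log ((Ωt 0).det + t * c)
          - (1 / 2) * (r ⬝ᵥ (Ωt 0).mulVec r + t * r i ^ 2) := by
    funext t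
    rw [gaussLRLL, ← hdet t, ← hquad t]
  rw [hfun]
  -- derivative
  have hne : (Ωt 0).det + a i * c ≠ 0 := by rw [hdetM]; exact ne_of_gt hdetpos
  have h1 : HasDerivAt (fun t : ℝ => (Ωt 0).det + t * c) c (a i) := by
    simpa using (hasDerivAt_id (a i)).mul_const c |>.const_add ((Ωt 0).det)
  have hlog : HasDerivAt (fun t : ℝ => Real.log ((Ωt 0).det + t * c))
      (c / ((Ωt 0).det + a i * c)) (a i) := h1.log hne
  have h2 : HasDerivAt (fun t : ℝ => r ⬝ᵥ (Ωt 0).mulVec r + t * r i ^ 2)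
      (r i ^ 2) (a i) := by
    simpa using (hasDerivAt_id (a i)).mul_const (r i ^ 2) |>.const_add (r ⬝ᵥ (Ωt 0).mulVec r)
  have h3 := ((hlog.const_mul ((1:ℝ)/2)).const_add (-((D : ℝ) / 2) * Real.log (2 * Real.pi))).sub
      (h2.const_mul ((1:ℝ)/2))
  convert h3 using 1
  case e'_4 => rfl
  case e'_5 => rfl
  case e'_8 => rfl
  have hinv : M⁻¹ i i = c / M.det := by
    rw [Matrix.inv_def, Matrix.smul_apply, ← hcadj, smul_eq_mul,
      Ring.inverse_eq_inv, div_eq_inv_mul]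
  have hri : r i = y i - μ i := by simp [hr]
  rw [hinv, hdetM, hri]
  ring
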